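/- For every t > 0 and k ∈ ℕ, the Laguerre-type integral identity holds: (k!(n-1)!/(k+n-1)!) ∫_{ℝ^{2n}} p^λ_{2t}(2y,2v) φ^{n-1}_{k,λ}(2iy,2iv) dy dv = c_λ e^{2t(2k+n)|λ|}, where φ^{n-1}_{k,λ}(2iy,2iv) denotes the holomorphic extension of the Laguerre function evaluated at purely imaginary arguments and c_λ is a constant depending only on λ and n. -/

import Mathlib

open MeasureTheory Complex

noncomputable section

/-- The special Hermite heat kernel
`p^λ_t(x,u) = (4π)^{-n} λ^n (sinh tλ)^{-n} e^{-(λ/4)(coth tλ)(|x|²+|u|²)}`. -/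
def twistedHeatKernelR {n : ℕ} (lam t : ℝ)
    (p : (Fin n → ℝ) × (Fin n → ℝ)) : ℝ :=
  (4 * Real.pi) ^ (-(n : ℤ)) * lam ^ n * (Real.sinh (t * lam)) ^ (-(n : ℤ)) *
    Real.exp (-(lam / 4) * (Real.cosh (t * lam) / Real.sinh (t * lam)) *
      ((∑ j, (p.1 j) ^ 2) + ∑ j, (p.2 j) ^ 2))

/-- The generalized Laguerre polynomial `L_k^a(x)`. -/
def laguerre (a k : ℕ) (x : ℝ) : ℝ :=
  ∑ i ∈ Finset.range (k + 1),
    (-1 : ℝ) ^ i * ((k + a).choose (k - i)) * x ^ i / (i.factorial)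

section Aux
open Set

lemma radial_int (c : ℝ) (hc : 0 < c) (m : ℕ) (hm : 0 < m) :
    ∫ y in Ioi (0:ℝ), y ^ (2*m-1) * Real.exp (-(c*y^2)) = (m-1).factorial / (2 * c^m) := by
  have h2 : (2:ℝ) ≠ 0 := two_ne_zero
  have key := MeasureTheory.integral_comp_rpow_Ioi
      (fun u => u ^ ((m:ℝ)-1) * Real.exp (-(c*u))) (p := 2) h2
  have hL : ∫ x in Ioi (0:ℝ), (|2| * x ^ ((2:ℝ) - 1)) •
      ((x ^ (2:ℝ)) ^ ((m:ℝ)-1) * Real.exp (-(c * x ^ (2:ℝ))))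
      = 2 * ∫ y in Ioi (0:ℝ), y ^ (2*m-1) * Real.exp (-(c*y^2)) := by
    rw [← integral_const_mul]
    refine setIntegral_congr_fun measurableSet_Ioi (fun x hx => ?_)
    have hx0 : (0:ℝ) < x := hx
    have hx2 : x ^ (2:ℝ) = x ^ (2:ℕ) := by
      rw [← Real.rpow_natCast x 2]; norm_num
    have hxm : (x ^ (2:ℝ)) ^ ((m:ℝ)-1) = x ^ (2*m-2 : ℕ) := by
      rw [← Real.rpow_mul hx0.le, ← Real.rpow_natCast x (2*m-2)]
      congr 1
      have h2m : (2:ℕ) ≤ 2*m := by omega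
      push_cast [h2m]; ring
    rw [hxm, hx2]
    have h21 : x ^ ((2:ℝ)-1) = x := by norm_num
    rw [h21]
    have hpow : x * x ^ (2*m-2 : ℕ) = x ^ (2*m-1 : ℕ) := by
      rw [← pow_succ']
      congr 1; omega
    have habs : |(2:ℝ)| = 2 := by norm_num
    simp only [smul_eq_mul, habs]
    rw [← hpow]; ring
  have hR : ∫ y in Ioi (0:ℝ), y ^ ((m:ℝ)-1) * Real.exp (-(c*y))
      = (1/c) ^ (m:ℝ) * Real.Gamma m := by
    exact Real.integral_rpow_mul_exp_neg_mul_Ioi (by exact_mod_cast hm) hc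
  have hG : Real.Gamma m = (m-1).factorial := by
    obtain ⟨m', rfl⟩ : ∃ m', m = m' + 1 := ⟨m - 1, by omega⟩
    rw [show ((m' + 1 : ℕ) : ℝ) = (m' : ℝ) + 1 by push_cast; ring,
      Real.Gamma_nat_eq_factorial]
    simp
  have hcpow : (1/c) ^ (m:ℝ) = 1 / c ^ m := by
    rw [Real.rpow_natCast (1/c) m, div_pow, one_pow]
  have := hL.symm.trans (key.trans hR)
  rw [hG, hcpow] at this
  field_simp at this ⊢
  linarith

variable {n : ℕ}

local notation "E" n => EuclideanSpace ℝ (Fin n ⊕ Fin n)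

lemma euclid_nontrivial (hn : 0 < n) : Nontrivial (E n) := by
  haveI : Nonempty (Fin n ⊕ Fin n) := ⟨Sum.inl ⟨0, hn⟩⟩
  exact inferInstanceAs (Nontrivial (PiLp 2 fun _ : Fin n ⊕ Fin n => ℝ))

lemma euclid_dim (hn : 0 < n) : Module.finrank ℝ (E n) = 2 * n := by
  rw [finrank_euclideanSpace]; simp [Fintype.card_sum]; ring

lemma moment_aux (hn : 0 < n) (c : ℝ) (hc : 0 < c) (i : ℕ) :
    ∫ x : E n, ‖x‖^(2*i) * Real.exp (-(c * ‖x‖^2))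
      = ((2*n) * (volume (Metric.ball (0 : E n) 1)).toReal) *
        ((n+i-1).factorial / (2 * c^(n+i))) := by
  haveI := euclid_nontrivial hn
  have key := MeasureTheory.integral_fun_norm_addHaar (volume : Measure (E n))
    (fun y => y^(2*i) * Real.exp (-(c * y^2)))
  rw [euclid_dim hn] at key
  rw [key, ← radial_int c hc (n+i) (by omega)]
  rw [nsmul_eq_mul, smul_eq_mul, ← mul_assoc]
  push_cast
  congr 1
  refine setIntegral_congr_fun measurableSet_Ioi (fun y hy => ?_)
  rw [smul_eq_mul]
  rw [show (2*(n+i)-1) = (2*n-1) + 2*i by omega, pow_add]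
  ring

lemma moment_int (hn : 0 < n) (c : ℝ) (hc : 0 < c) (i : ℕ) :
    ∫ x : E n, ‖x‖^(2*i) * Real.exp (-(c * ‖x‖^2))
      = Real.pi^n * (n+i-1).factorial / ((n-1).factorial * c^(n+i)) := by
  have hgauss : ∫ x : E n, ‖x‖^(2*0) * Real.exp (-((1:ℝ) * ‖x‖^2)) = Real.pi ^ n := by
    have h := GaussianFourier.integral_rexp_neg_mul_sq_norm (V := E n) one_pos
    rw [euclid_dim hn] at h
    simp only [mul_zero, pow_zero, one_mul] at h ⊢
    rw [show (fun x : E n => Real.exp (-‖x‖^2)) = fun x : E n => Real.exp (-1 * ‖x‖^2) by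
      funext x; ring_nf]
    rw [h, div_one]
    rw [← Real.rpow_natCast Real.pi n]
    congr 1
    push_cast; ring
  rw [moment_aux hn 1 one_pos 0] at hgauss
  have h2 := moment_aux hn c hc i
  set V := (volume (Metric.ball (0 : E n) 1)).toReal with hV
  have hfac : (0:ℝ) < (n+0-1).factorial := by positivity
  have hVval : (2*(n:ℝ)) * V = 2 * Real.pi ^ n / (n-1).factorial := by
    have : ((2*(n:ℝ)) * V) * ((n+0-1).factorial / (2 * (1:ℝ)^(n+0))) = Real.pi ^ n := hgauss
    rw [one_pow, show n+0-1 = n-1 by omega] at this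
    field_simp at this ⊢
    linarith
  rw [h2, hVval]
  have hc' : c^(n+i) ≠ 0 := by positivity
  have hf' : ((n-1).factorial : ℝ) ≠ 0 := by positivity
  field_simp

lemma gauss_integrable (b : ℝ) (hb : 0 < b) :
    Integrable (fun x : E n => Real.exp (-(b * ‖x‖^2))) := by
  have h := (GaussianFourier.integrable_cexp_neg_mul_sq_norm_add
    (show 0 < ((b:ℂ)).re by simpa using hb) 0 (0 : E n)).norm
  refine h.congr (Filter.Eventually.of_forall fun x => ?_)
  simp only [zero_mul, add_zero, Complex.norm_exp]
  rw [show (-(b:ℂ) * (‖x‖:ℂ)^2) = ((-(b * ‖x‖^2) : ℝ) : ℂ) by push_cast; ring]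
  rw [Complex.ofReal_re]

lemma moment_integrable (c : ℝ) (hc : 0 < c) (i : ℕ) :
    Integrable (fun x : E n => ‖x‖^(2*i) * Real.exp (-(c * ‖x‖^2))) := by
  have hg : Integrable (fun x : E n =>
      ((2/c)^i * (i.factorial : ℝ)) * Real.exp (-(c/2 * ‖x‖^2))) :=
    (gauss_integrable (c/2) (by linarith)).const_mul _
  refine hg.mono' ?_ (Filter.Eventually.of_forall fun x => ?_)
  · refine Continuous.aestronglyMeasurable ?_
    exact ((continuous_norm.pow _).mul ((Real.continuous_exp.comp
      ((continuous_const.mul ((continuous_norm.pow 2))).neg))))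
  · have hnn : (0:ℝ) ≤ ‖x‖^(2*i) * Real.exp (-(c * ‖x‖^2)) := by positivity
    rw [Real.norm_eq_abs, _root_.abs_of_nonneg hnn]
    have hu : (0:ℝ) ≤ c/2 * ‖x‖^2 := by positivity
    have hb := Real.pow_div_factorial_le_exp _ hu i
    have hfac : (0:ℝ) < (i.factorial : ℝ) := by positivity
    have h1 : ‖x‖^(2*i) = (2/c)^i * (c/2 * ‖x‖^2)^i := by
      rw [mul_pow, ← mul_assoc, ← mul_pow]
      rw [pow_mul, div_mul_div_comm]
      rw [show 2 * c / (c * 2) = 1 by rw [mul_comm c 2]; exact div_self (by positivity)]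
      simp
    rw [h1]
    have h2 : (c/2 * ‖x‖^2)^i ≤ i.factorial * Real.exp (c/2 * ‖x‖^2) := by
      rw [div_le_iff₀ hfac] at hb
      linarith [hb]
    have h3 : Real.exp (-(c * ‖x‖^2)) = Real.exp (c/2*‖x‖^2) * Real.exp (-(c/2 * ‖x‖^2)) *
        Real.exp (-(c * ‖x‖^2)) := by
      rw [← Real.exp_add, ← Real.exp_add]; ring_nf
    calc (2/c)^i * (c/2*‖x‖^2)^i * Real.exp (-(c * ‖x‖^2))
        ≤ (2/c)^i * ((i.factorial : ℝ) * Real.exp (c/2*‖x‖^2)) * Real.exp (-(c * ‖x‖^2)) := by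
          have hp : (0:ℝ) ≤ (2/c)^i := by positivity
          have he : (0:ℝ) ≤ Real.exp (-(c * ‖x‖^2)) := (Real.exp_pos _).le
          exact mul_le_mul_of_nonneg_right (mul_le_mul_of_nonneg_left h2 hp) he
      _ = (2/c)^i * (i.factorial:ℝ) * (Real.exp (c/2*‖x‖^2) * Real.exp (-(c * ‖x‖^2))) := by ring
      _ = (2/c)^i * (i.factorial:ℝ) * Real.exp (-(c/2 * ‖x‖^2)) := by
          rw [← Real.exp_add]; congr 1; ring

lemma norm_sq_eq (x : E n) : ‖x‖^2 = ∑ i, x i ^ 2 := by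
  rw [EuclideanSpace.norm_eq]
  rw [Real.sq_sqrt (by positivity)]
  congr 1; funext i; rw [Real.norm_eq_abs, _root_.sq_abs]

lemma transfer (G : ℝ → ℝ) :
    (∫ q : (Fin n → ℝ) × (Fin n → ℝ), G ((∑ j, q.1 j ^2) + ∑ j, q.2 j^2))
      = ∫ x : E n, G (‖x‖^2) := by
  have h1 : MeasurePreserving (⇑((MeasurableEquiv.toLp 2 (Fin n ⊕ Fin n → ℝ)).symm))
      volume volume := EuclideanSpace.volume_preserving_symm_measurableEquiv_toLp _
  have h2 : MeasurePreserving
      (⇑(MeasurableEquiv.sumPiEquivProdPi (fun _ : Fin n ⊕ Fin n => ℝ)))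
      volume volume := by
    have := measurePreserving_sumPiEquivProdPi (fun _ : Fin n ⊕ Fin n => (volume : Measure ℝ))
    rw [show (volume : Measure ((Fin n → ℝ) × (Fin n → ℝ))) =
      (volume : Measure (Fin n → ℝ)).prod (volume : Measure (Fin n → ℝ)) from rfl]
    rw [show (volume : Measure (Fin n ⊕ Fin n → ℝ)) =
      Measure.pi (fun _ => volume) from rfl]
    convert this using 2 <;> rfl
  have mp := h2.comp h1
  have me : MeasurableEmbedding (⇑(MeasurableEquiv.sumPiEquivProdPi
      (fun _ : Fin n ⊕ Fin n => ℝ)) ∘ ⇑((MeasurableEquiv.toLp 2 (Fin n ⊕ Fin n → ℝ)).symm)) :=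
    (((MeasurableEquiv.toLp 2 (Fin n ⊕ Fin n → ℝ)).symm).trans
      (MeasurableEquiv.sumPiEquivProdPi _)).measurableEmbedding
  rw [← mp.integral_comp me (fun q => G ((∑ j, q.1 j ^2) + ∑ j, q.2 j^2))]
  refine integral_congr_ae (Filter.Eventually.of_forall fun x => ?_)
  show G _ = G _
  congr 1
  rw [norm_sq_eq, Fintype.sum_sum_type]
  rfl

lemma sum_id (k : ℕ) (hn : 0 < n) (x c : ℝ) (hc : c ≠ 0) :
    ((k.factorial:ℝ) * (n-1).factorial / (k+(n-1)).factorial) *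
      ∑ i ∈ Finset.range (k+1), (((k+(n-1)).choose (k-i) : ℝ) * x^i / i.factorial *
        ((n+i-1).factorial / ((n-1).factorial * c^(n+i))))
      = (c + x)^k / c^(n+k) := by
  rw [Finset.mul_sum]
  rw [show (c+x)^k = ∑ i ∈ Finset.range (k+1), x^i * c^(k-i) * (k.choose i) from by
    rw [add_comm c x, add_pow]]
  rw [Finset.sum_div]
  refine Finset.sum_congr rfl fun i hi => ?_
  have hik : i ≤ k := Nat.lt_succ_iff.mp (Finset.mem_range.mp hi)
  have h1 := Nat.cast_choose ℝ (show k-i ≤ k+(n-1) by omega)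
  rw [show k+(n-1)-(k-i) = (n-1)+i from by omega] at h1
  have h2 : ((k.choose i : ℕ) : ℝ) = k.factorial / (i.factorial * (k-i).factorial) :=
    Nat.cast_choose ℝ hik
  have h3 : (n+i-1) = (n-1)+i := by omega
  have h4 : c^(n+k) = c^(n+i) * c^(k-i) := by
    rw [← pow_add]; congr 1; omega
  rw [h1, h2, h3, h4]
  have f1 : ((k-i).factorial : ℝ) ≠ 0 := by positivity
  have f2 : (((n-1)+i).factorial : ℝ) ≠ 0 := by positivity
  have f3 : ((k+(n-1)).factorial : ℝ) ≠ 0 := by positivity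
  have f4 : ((n-1).factorial : ℝ) ≠ 0 := by positivity
  have f5 : (i.factorial : ℝ) ≠ 0 := by positivity
  have f6 : (k.factorial : ℝ) ≠ 0 := by positivity
  have f7 : c^(n+i) ≠ 0 := pow_ne_zero _ hc
  have f8 : c^(k-i) ≠ 0 := pow_ne_zero _ hc
  field_simp

end Aux

/-- the Laguerre-type integral identity
`(k!(n-1)!/(k+n-1)!) ∫ p^λ_{2t}(2y,2v) φ^{n-1}_{k,λ}(2iy,2iv) dy dv
  = c_λ e^{2t(2k+n)|λ|}`, where the holomorphic extension satisfies
`φ^{n-1}_{k,λ}(2iy,2iv) = L_k^{n-1}(-2|λ|(|y|²+|v|²)) e^{|λ|(|y|²+|v|²)}`. -/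
theorem laguerre_imaginary_integral_identity
    {n : ℕ} (hn : 0 < n) (lam : ℝ) (hlam : lam ≠ 0) :
    ∃ c : ℝ, ∀ (t : ℝ), 0 < t → ∀ k : ℕ,
      ((k.factorial : ℝ) * ((n - 1).factorial : ℝ) / ((k + n - 1).factorial : ℝ)) *
        ∫ q : (Fin n → ℝ) × (Fin n → ℝ),
          twistedHeatKernelR lam (2 * t) (fun j => 2 * q.1 j, fun j => 2 * q.2 j) *
            (laguerre (n - 1) k (-2 * |lam| * ((∑ j, (q.1 j) ^ 2) + ∑ j, (q.2 j) ^ 2)) *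
              Real.exp (|lam| * ((∑ j, (q.1 j) ^ 2) + ∑ j, (q.2 j) ^ 2))) =
      c * Real.exp (2 * t * (2 * k + n) * |lam|) := by
  refine ⟨(4:ℝ)^(-(n:ℤ)), fun t ht k => ?_⟩
  set μ : ℝ := |lam| with hμdef
  have hμ : 0 < μ := abs_pos.mpr hlam
  set X : ℝ := 2*t*μ with hXdef
  have hX : 0 < X := by positivity
  set σ : ℝ := Real.sinh X with hσdef
  have hσ : 0 < σ := Real.sinh_pos_iff.mpr hX
  set Epos : ℝ := Real.exp X with hEdef
  have hEpos : 0 < Epos := Real.exp_pos _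
  set c0 : ℝ := μ / (Epos * σ) with hc0def
  have hc0 : 0 < c0 := by positivity
  set A : ℝ := (4*Real.pi)^(-(n:ℤ)) * μ^n * σ^(-(n:ℤ)) with hAdef
  -- sign-independent kernel facts
  have hsinh : lam^n * (Real.sinh (2*t*lam))^(-(n:ℤ)) = μ^n * σ^(-(n:ℤ)) := by
    rcases hlam.lt_or_gt with h | h
    · have hl : lam = -μ := by rw [hμdef, abs_of_neg h]; ring
      rw [hσdef, hXdef, hl, show 2*t*(-μ) = -(2*t*μ) by ring, Real.sinh_neg]
      rw [zpow_neg, zpow_neg, zpow_natCast, zpow_natCast]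
      rw [show (-μ:ℝ) = (-1)*μ by ring, show (-Real.sinh (2*t*μ)) = (-1)*Real.sinh (2*t*μ) by ring,
        mul_pow, mul_pow, mul_inv]
      rw [← inv_pow, inv_neg_one]
      have hone : ((-1:ℝ)^n)*((-1:ℝ)^n) = 1 := by rw [← mul_pow]; norm_num
      calc (-1:ℝ)^n * μ^n * ((-1)^n * (Real.sinh (2*t*μ)^n)⁻¹)
          = ((-1:ℝ)^n * (-1)^n) * (μ^n * (Real.sinh (2*t*μ)^n)⁻¹) := by ring
        _ = μ^n * (Real.sinh (2*t*μ)^n)⁻¹ := by rw [hone, one_mul]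
    · have hl : μ = lam := by rw [hμdef, abs_of_pos h]
      rw [hσdef, hXdef, ← hl]
  have hcoth : lam * (Real.cosh (2*t*lam)/Real.sinh (2*t*lam))
      = μ * Real.cosh X / σ := by
    rcases hlam.lt_or_gt with h | h
    · have hl : lam = -μ := by rw [hμdef, abs_of_neg h]; ring
      rw [hσdef, hXdef, hl, show 2*t*(-μ) = -(2*t*μ) by ring, Real.sinh_neg, Real.cosh_neg]
      have hσ' : Real.sinh (2*t*μ) ≠ 0 := by
        have := Real.sinh_pos_iff.mpr (show (0:ℝ) < 2*t*μ by positivity)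
        exact this.ne'
      field_simp
    · have hl : μ = lam := by rw [hμdef, abs_of_pos h]
      rw [hσdef, hXdef, ← hl]
      ring
  have hc0eq : μ * Real.cosh X / σ - μ = c0 := by
    have hcs := Real.cosh_sub_sinh X
    rw [Real.exp_neg] at hcs
    rw [← hσdef, ← hEdef] at hcs
    have hcs2 : (Real.cosh X - σ) * Epos = 1 := by rw [hcs]; exact inv_mul_cancel₀ hEpos.ne'
    rw [hc0def]
    field_simp
    linear_combination hcs2
  have hplus : c0 + 2*μ = μ * Epos / σ := by
    have hse := Real.sinh_eq X
    rw [Real.exp_neg] at hse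
    rw [← hσdef, ← hEdef] at hse
    have hse2 : 2*σ*Epos = Epos^2 - 1 := by rw [hse]; field_simp
    rw [hc0def]
    field_simp
    linear_combination hse2
  -- kernel * exp reduction
  have hker : ∀ s : ℝ, (4*Real.pi)^(-(n:ℤ)) * lam^n * (Real.sinh (2*t*lam))^(-(n:ℤ)) *
      Real.exp (-(lam/4) * (Real.cosh (2*t*lam)/Real.sinh (2*t*lam)) * (4*s)) *
      Real.exp (μ*s) = A * Real.exp (-(c0*s)) := by
    intro s
    have harg : -(lam/4) * (Real.cosh (2*t*lam)/Real.sinh (2*t*lam)) * (4*s) + μ*s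
        = -(c0*s) := by
      calc -(lam/4) * (Real.cosh (2*t*lam)/Real.sinh (2*t*lam)) * (4*s) + μ*s
          = -((lam * (Real.cosh (2*t*lam)/Real.sinh (2*t*lam))) * s) + μ*s := by ring
        _ = -((μ * Real.cosh X / σ) * s) + μ*s := by rw [hcoth]
        _ = -(c0*s) := by rw [← hc0eq]; ring
    calc (4*Real.pi)^(-(n:ℤ)) * lam^n * (Real.sinh (2*t*lam))^(-(n:ℤ)) *
        Real.exp (-(lam/4) * (Real.cosh (2*t*lam)/Real.sinh (2*t*lam)) * (4*s)) *
        Real.exp (μ*s)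
        = ((4*Real.pi)^(-(n:ℤ)) * (lam^n * (Real.sinh (2*t*lam))^(-(n:ℤ)))) *
          (Real.exp (-(lam/4) * (Real.cosh (2*t*lam)/Real.sinh (2*t*lam)) * (4*s)) *
            Real.exp (μ*s)) := by ring
      _ = ((4*Real.pi)^(-(n:ℤ)) * (μ^n * σ^(-(n:ℤ)))) *
          Real.exp (-(lam/4) * (Real.cosh (2*t*lam)/Real.sinh (2*t*lam)) * (4*s) + μ*s) := by
            rw [hsinh, Real.exp_add]
      _ = A * Real.exp (-(c0*s)) := by rw [harg, hAdef]; ring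
  -- pointwise expansion of the integrand
  have hpt : ∀ q : (Fin n → ℝ) × (Fin n → ℝ),
      twistedHeatKernelR lam (2 * t) (fun j => 2 * q.1 j, fun j => 2 * q.2 j) *
        (laguerre (n - 1) k (-2 * μ * ((∑ j, (q.1 j) ^ 2) + ∑ j, (q.2 j) ^ 2)) *
          Real.exp (μ * ((∑ j, (q.1 j) ^ 2) + ∑ j, (q.2 j) ^ 2)))
      = ∑ i ∈ Finset.range (k+1),
          (A * ((k+(n-1)).choose (k-i) : ℝ) * (2*μ)^i / (i.factorial : ℝ)) *
            (((∑ j, (q.1 j) ^ 2) + ∑ j, (q.2 j) ^ 2)^i *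
              Real.exp (-(c0 * ((∑ j, (q.1 j) ^ 2) + ∑ j, (q.2 j) ^ 2)))) := by
    intro q
    set s : ℝ := (∑ j, (q.1 j) ^ 2) + ∑ j, (q.2 j) ^ 2 with hsdef
    have h4 : ((∑ j, (2 * q.1 j) ^ 2) + ∑ j, (2 * q.2 j) ^ 2) = 4 * s := by
      rw [hsdef]
      simp only [mul_pow, ← Finset.mul_sum]
      norm_num
      try ring
    simp only [twistedHeatKernelR, laguerre]
    rw [h4, Finset.sum_mul, Finset.mul_sum]
    refine Finset.sum_congr rfl fun i _ => ?_
    have hneg : (-2*μ*s : ℝ)^i = (-1)^i * ((2*μ)^i * s^i) := by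
      rw [show (-2*μ*s : ℝ) = (-1)*((2*μ)*s) by ring, mul_pow, mul_pow]
    have hone : ((-1:ℝ)^i)*((-1:ℝ)^i) = 1 := by rw [← mul_pow]; norm_num
    calc (4*Real.pi)^(-(n:ℤ)) * lam^n * (Real.sinh (2*t*lam))^(-(n:ℤ)) *
        Real.exp (-(lam/4) * (Real.cosh (2*t*lam)/Real.sinh (2*t*lam)) * (4*s)) *
        ((-1:ℝ)^i * ((k+(n-1)).choose (k-i) : ℝ) * (-2*μ*s)^i / (i.factorial : ℝ) *
          Real.exp (μ*s))
        = ((4*Real.pi)^(-(n:ℤ)) * lam^n * (Real.sinh (2*t*lam))^(-(n:ℤ)) *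
            Real.exp (-(lam/4) * (Real.cosh (2*t*lam)/Real.sinh (2*t*lam)) * (4*s)) *
            Real.exp (μ*s)) *
          ((-1:ℝ)^i * ((k+(n-1)).choose (k-i) : ℝ) * (-2*μ*s)^i / (i.factorial : ℝ)) := by
            ring
      _ = (A * Real.exp (-(c0*s))) *
          ((-1:ℝ)^i * ((k+(n-1)).choose (k-i) : ℝ) * ((-1:ℝ)^i * ((2*μ)^i * s^i)) /
            (i.factorial : ℝ)) := by rw [hker s, hneg]
      _ = (A * ((k+(n-1)).choose (k-i) : ℝ) * (2*μ)^i / (i.factorial : ℝ)) *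
          (s^i * Real.exp (-(c0*s))) := by
            linear_combination (A * Real.exp (-(c0*s)) *
              (((k+(n-1)).choose (k-i) : ℝ)) * (2*μ)^i * s^i / (i.factorial : ℝ)) * hone
  -- transfer to Euclidean space and integrate termwise
  set G : ℝ → ℝ := fun r => ∑ i ∈ Finset.range (k+1),
      (A * ((k+(n-1)).choose (k-i) : ℝ) * (2*μ)^i / (i.factorial : ℝ)) *
        (r^i * Real.exp (-(c0*r))) with hGdef
  have hint : (∫ q : (Fin n → ℝ) × (Fin n → ℝ),
      twistedHeatKernelR lam (2 * t) (fun j => 2 * q.1 j, fun j => 2 * q.2 j) *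
        (laguerre (n - 1) k (-2 * μ * ((∑ j, (q.1 j) ^ 2) + ∑ j, (q.2 j) ^ 2)) *
          Real.exp (μ * ((∑ j, (q.1 j) ^ 2) + ∑ j, (q.2 j) ^ 2))))
      = ∑ i ∈ Finset.range (k+1),
          (A * ((k+(n-1)).choose (k-i) : ℝ) * (2*μ)^i / (i.factorial : ℝ)) *
            (Real.pi^n * (n+i-1).factorial / ((n-1).factorial * c0^(n+i))) := by
    calc (∫ q : (Fin n → ℝ) × (Fin n → ℝ),
        twistedHeatKernelR lam (2 * t) (fun j => 2 * q.1 j, fun j => 2 * q.2 j) *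
          (laguerre (n - 1) k (-2 * μ * ((∑ j, (q.1 j) ^ 2) + ∑ j, (q.2 j) ^ 2)) *
            Real.exp (μ * ((∑ j, (q.1 j) ^ 2) + ∑ j, (q.2 j) ^ 2))))
        = ∫ q : (Fin n → ℝ) × (Fin n → ℝ), G ((∑ j, (q.1 j) ^ 2) + ∑ j, (q.2 j) ^ 2) :=
          integral_congr_ae (Filter.Eventually.of_forall fun q => hpt q)
      _ = ∫ x : EuclideanSpace ℝ (Fin n ⊕ Fin n), G (‖x‖^2) := transfer G
      _ = ∫ x : EuclideanSpace ℝ (Fin n ⊕ Fin n), ∑ i ∈ Finset.range (k+1),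
            (A * ((k+(n-1)).choose (k-i) : ℝ) * (2*μ)^i / (i.factorial : ℝ)) *
              (‖x‖^(2*i) * Real.exp (-(c0*‖x‖^2))) := by
          refine integral_congr_ae (Filter.Eventually.of_forall fun x => ?_)
          simp only [hGdef]
          exact Finset.sum_congr rfl fun i _ => by rw [← pow_mul]
      _ = ∑ i ∈ Finset.range (k+1), ∫ x : EuclideanSpace ℝ (Fin n ⊕ Fin n),
            (A * ((k+(n-1)).choose (k-i) : ℝ) * (2*μ)^i / (i.factorial : ℝ)) *
              (‖x‖^(2*i) * Real.exp (-(c0*‖x‖^2))) :=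
          integral_finset_sum _ (fun i _ => (moment_integrable c0 hc0 i).const_mul _)
      _ = ∑ i ∈ Finset.range (k+1),
            (A * ((k+(n-1)).choose (k-i) : ℝ) * (2*μ)^i / (i.factorial : ℝ)) *
              (Real.pi^n * (n+i-1).factorial / ((n-1).factorial * c0^(n+i))) := by
          refine Finset.sum_congr rfl fun i _ => ?_
          rw [integral_const_mul, moment_int hn c0 hc0 i]
  rw [hint]
  rw [show k + n - 1 = k + (n-1) from by omega]
  -- factor out A * π^n and apply the combinatorial identity
  have hfact : (∑ i ∈ Finset.range (k+1),
        (A * ((k+(n-1)).choose (k-i) : ℝ) * (2*μ)^i / (i.factorial : ℝ)) *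
          (Real.pi^n * (n+i-1).factorial / ((n-1).factorial * c0^(n+i))))
      = (A * Real.pi^n) * ∑ i ∈ Finset.range (k+1),
          (((k+(n-1)).choose (k-i) : ℝ) * (2*μ)^i / (i.factorial : ℝ) *
            ((n+i-1).factorial / ((n-1).factorial * c0^(n+i)))) := by
    rw [Finset.mul_sum]
    exact Finset.sum_congr rfl fun i _ => by ring
  rw [hfact]
  rw [show ((k.factorial : ℝ) * ((n - 1).factorial : ℝ) / ((k + (n-1)).factorial : ℝ)) *
      ((A * Real.pi^n) * ∑ i ∈ Finset.range (k+1),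
        (((k+(n-1)).choose (k-i) : ℝ) * (2*μ)^i / (i.factorial : ℝ) *
          ((n+i-1).factorial / ((n-1).factorial * c0^(n+i)))))
    = (A * Real.pi^n) * (((k.factorial : ℝ) * ((n - 1).factorial : ℝ) /
        ((k + (n-1)).factorial : ℝ)) *
      ∑ i ∈ Finset.range (k+1),
        (((k+(n-1)).choose (k-i) : ℝ) * (2*μ)^i / (i.factorial : ℝ) *
          ((n+i-1).factorial / ((n-1).factorial * c0^(n+i))))) from by ring]
  rw [sum_id k hn (2*μ) c0 hc0.ne']
  -- final scalar computation
  have hexp : Real.exp (2*t*(2*(k:ℝ)+(n:ℝ))*μ) = Epos^(2*k+n) := by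
    rw [hEdef, hXdef, ← Real.exp_nat_mul]
    congr 1
    push_cast
    ring
  rw [hexp, hplus, hc0def, hAdef]
  have hπ : (0:ℝ) < Real.pi := Real.pi_pos
  rw [zpow_neg, zpow_neg, zpow_natCast, zpow_natCast, zpow_neg, zpow_natCast]
  rw [div_pow, div_pow, mul_pow 4 Real.pi, mul_pow μ Epos, mul_pow Epos σ]
  field_simp
  ring
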